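/- Let λ be a nearest-neighbor path of length m in ℤ^d and let 0 = t₀ < t₁ < ⋯ < t_n = m be cut times of λ (each tᵢ satisfies {λ(0),…,λ(tᵢ)} ∩ {λ(tᵢ+1),…,λ(m)} = ∅ for i < n). Then len(LE(λ)) = Σ_{i=1}^{n} len(LE(λ[t_{i−1}, t_i])). -/

import Mathlib

/-- A nearest-neighbor adjacency on `ℤ^d`. -/
def NNAdj {d : ℕ} (x y : Fin d → ℤ) : Prop := (∑ i, |x i - y i|) = 1

/-- A nearest-neighbor path in `ℤ^d`, represented as its (finite) list of vertices. -/
def IsNNPath {d : ℕ} (lam : List (Fin d → ℤ)) : Prop := lam.Chain' NNAdj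

/-- Chronological loop erasure. -/
def loopErase {α : Type*} [DecidableEq α] : List α → List α
  | [] => []
  | a :: l => a :: loopErase ((l.reverse.takeWhile (· ≠ a)).reverse)
  termination_by l => l.length
  decreasing_by
    simp only [List.length_cons, List.length_reverse]
    exact Nat.lt_succ_of_le (le_trans (List.takeWhile_sublist _).length_le (by simp))

theorem takeWhile_append_all {α} (p : α → Bool) (l₁ l₂ : List α) (h : ∀ x ∈ l₁, p x) :
    (l₁ ++ l₂).takeWhile p = l₁ ++ l₂.takeWhile p := by
  induction l₁ with
  | nil => simp
  | cons a l ih =>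
    simp [List.takeWhile_cons, h a List.mem_cons_self,
      ih fun x hx => h x (List.mem_cons_of_mem _ hx)]

theorem loopErase_cons_of_not_mem {α} [DecidableEq α] {a : α} {l : List α} (h : a ∉ l) :
    loopErase (a :: l) = a :: loopErase l := by
  rw [loopErase]
  have : l.reverse.takeWhile (· ≠ a) = l.reverse := by
    apply List.takeWhile_eq_self_iff.mpr
    intro x hx
    simp only [ne_eq, decide_eq_true_eq]
    exact fun e => h (e ▸ (List.mem_reverse.mp hx))
  rw [this, List.reverse_reverse]

theorem loopErase_eq_nil_iff {α} [DecidableEq α] {l : List α} : loopErase l = [] ↔ l = [] := by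
  cases l <;> simp [loopErase]

theorem loopErase_append {α} [DecidableEq α] :
    ∀ l₁ l₂ : List α, (∀ x ∈ l₁, x ∉ l₂) →
      loopErase (l₁ ++ l₂) = loopErase l₁ ++ loopErase l₂
  | [], l₂, _ => by simp [loopErase]
  | a :: l₁, l₂, h => by
    have ha : a ∉ l₂ := h a List.mem_cons_self
    rw [List.cons_append, loopErase]
    have key : ((l₁ ++ l₂).reverse.takeWhile (· ≠ a)).reverse
        = (l₁.reverse.takeWhile (· ≠ a)).reverse ++ l₂ := by
      rw [List.reverse_append, takeWhile_append_all _ _ _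
        (fun x hx => by
          simp only [ne_eq, decide_eq_true_eq]
          exact fun e => ha (e ▸ List.mem_reverse.mp hx)),
        List.reverse_append, List.reverse_reverse]
    rw [key, loopErase_append ((l₁.reverse.takeWhile (· ≠ a)).reverse) l₂
      (fun x hx => h x (List.mem_cons_of_mem _
        (List.mem_reverse.mp ((List.takeWhile_sublist _).mem (List.mem_reverse.mp hx)))))]
    rw [loopErase]
    simp
  termination_by l₁ _ _ => l₁.length
  decreasing_by
    simp only [List.length_cons, List.length_reverse]
    exact Nat.lt_succ_of_le (le_trans (List.takeWhile_sublist _).length_le (by simp))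

theorem loopErase_sum_pieces_nat {α} [DecidableEq α] (n : ℕ) :
    ∀ (lam : List α) (t : ℕ → ℕ), lam ≠ [] →
      (∀ i < n, t i < t (i+1)) → t 0 = 0 → t n = lam.length - 1 →
      (∀ i < n, ∀ x ∈ lam.take (t i + 1), x ∉ lam.drop (t i + 1)) →
      (loopErase lam).length - 1 =
        ∑ i ∈ Finset.range n,
          ((loopErase ((lam.drop (t i)).take (t (i+1) - t i + 1))).length - 1) := by
  induction n with
  | zero =>
    intro lam t hne _ h0 hn _
    have hL : lam.length = 1 := by
      have := List.length_pos_iff.mpr hne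
      omega
    obtain ⟨a, rfl⟩ := List.length_eq_one_iff.mp hL
    simp [loopErase]
  | succ n ih =>
    intro lam t hne hmono h0 hn hcut
    have hL : 1 ≤ lam.length := List.length_pos_iff.mpr hne
    have hm : ∀ i j, i ≤ j → j ≤ n + 1 → t i ≤ t j := by
      intro i j hij hj
      obtain ⟨k, rfl⟩ := Nat.exists_eq_add_of_le hij
      clear hij
      induction k with
      | zero => simp
      | succ k ihk =>
        rw [show i + (k+1) = (i+k)+1 from rfl]
        have h1 : i + k < n + 1 := by omega
        have := hmono (i + k) h1
        have := ihk (by omega)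
        omega
    set s := t n with hs
    have hsL1 : s < lam.length - 1 := by
      have := hmono n (Nat.lt_succ_self n)
      omega
    have hsL : s < lam.length := by omega
    set A := lam.take (s + 1) with hA
    set B := lam.drop (s + 1) with hB
    have hAB : ∀ x ∈ A, x ∉ B := hcut n (Nat.lt_succ_self n)
    have h1 : loopErase lam = loopErase A ++ loopErase B := by
      have := loopErase_append A B hAB
      rw [hA, hB, List.take_append_drop] at this
      exact this
    have h2 : lam.drop s = lam[s] :: B := List.drop_eq_getElem_cons hsL
    have haA : lam[s] ∈ A := by
      have h2' : s < A.length := by rw [hA, List.length_take]; omega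
      have h3 : A[s] = lam[s] := List.getElem_take
      exact h3 ▸ List.getElem_mem h2'
    have haB : lam[s] ∉ B := hAB _ haA
    have h3 : loopErase (lam.drop s) = lam[s] :: loopErase B := by
      rw [h2, loopErase_cons_of_not_mem haB]
    have h4 : (lam.drop s).take (t (n+1) - s + 1) = lam.drop s := by
      apply List.take_of_length_le
      rw [List.length_drop]
      omega
    have hAlen : A.length = s + 1 := by
      rw [hA, List.length_take]; omega
    have hih := ih A t (by
        intro hAnil
        rw [hAnil] at hAlen
        simp at hAlen)
      (fun i hi => hmono i (by omega)) h0 (by omega)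
      (by
        intro i hi x hx hx'
        have hti : t i ≤ s := hm i n (by omega) (by omega)
        have hxtake : x ∈ lam.take (t i + 1) := by
          rw [hA, List.take_take] at hx
          rwa [min_eq_left (by omega)] at hx
        have hxdrop : x ∈ lam.drop (t i + 1) := by
          rw [hA, List.drop_take] at hx'
          exact (List.take_sublist _ _).mem hx'
        exact hcut i (by omega) x hxtake hxdrop)
    have hpieces : ∀ i ∈ Finset.range n,
        ((loopErase ((A.drop (t i)).take (t (i+1) - t i + 1))).length - 1)
          = ((loopErase ((lam.drop (t i)).take (t (i+1) - t i + 1))).length - 1) := by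
      intro i hi
      rw [Finset.mem_range] at hi
      have h5 : t (i+1) ≤ s := hm (i+1) n (by omega) (by omega)
      have h6 : t i ≤ t (i+1) := hm i (i+1) (by omega) (by omega)
      rw [hA, List.drop_take, List.take_take, min_eq_left (by omega)]
    rw [Finset.sum_congr rfl hpieces] at hih
    rw [Finset.sum_range_succ, ← hih, ← hs, h4, h3, h1]
    have hAne : loopErase A ≠ [] := by
      intro hcon
      have := loopErase_eq_nil_iff.mp hcon
      rw [this] at hAlen
      simp at hAlen
    have : 1 ≤ (loopErase A).length := List.length_pos_iff.mpr hAne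
    rw [List.length_append, List.length_cons]
    omega

/-- If `0 = t₀ < t₁ < ⋯ < t_n = m` are cut times of a nearest-neighbor
path `λ` of length `m` (each `tᵢ`, `i < n`, satisfying that the vertex sets
`{λ(0),…,λ(tᵢ)}` and `{λ(tᵢ+1),…,λ(m)}` are disjoint), then the number of steps of
`LE(λ)` is the sum over `i` of the numbers of steps of `LE(λ[t_{i-1}, t_i])`.
Here `λ[a,b]` is `(lam.drop a).take (b - a + 1)` and the number of steps of a path is
its number of vertices minus one. -/
theorem loopErase_sum_pieces {d : ℕ} (lam : List (Fin d → ℤ)) (hpath : IsNNPath lam)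
    (hne : lam ≠ []) (n : ℕ) (t : Fin (n + 1) → ℕ) (hmono : StrictMono t)
    (h0 : t 0 = 0) (hlast : t (Fin.last n) = lam.length - 1)
    (hcut : ∀ i : Fin (n + 1), (i : ℕ) < n →
      ∀ x ∈ lam.take (t i + 1), x ∉ lam.drop (t i + 1)) :
    (loopErase lam).length - 1 =
      ∑ i : Fin n,
        ((loopErase ((lam.drop (t i.castSucc)).take (t i.succ - t i.castSucc + 1))).length
          - 1) := by
  classical
  set T : ℕ → ℕ := fun i => t ⟨min i n, Nat.lt_succ_of_le (Nat.min_le_right _ _)⟩ with hT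
  have hTeq : ∀ (i : ℕ) (h : i ≤ n), T i = t ⟨i, Nat.lt_succ_of_le h⟩ := by
    intro i h
    simp only [hT]
    congr 1
    exact Fin.ext (by simp [Nat.min_eq_left h])
  have hmain := loopErase_sum_pieces_nat n lam T hne
    (fun i hi => by
      rw [hTeq i (by omega), hTeq (i+1) (by omega)]
      exact hmono (Fin.mk_lt_mk.mpr (Nat.lt_succ_self i)))
    (by
      rw [hTeq 0 (Nat.zero_le _)]
      convert h0 using 2
      exact Fin.ext (by simp))
    (by
      rw [hTeq n le_rfl]
      convert hlast using 2
      exact Fin.ext (by simp))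
    (fun i hi x hx => by
      rw [hTeq i (by omega)] at *
      exact hcut ⟨i, by omega⟩ (by simpa) x hx)
  rw [hmain, ← Fin.sum_univ_eq_sum_range]
  apply Finset.sum_congr rfl
  intro i _
  have e1 : T (i : ℕ) = t i.castSucc := by
    rw [hTeq _ (le_of_lt i.isLt)]
    congr 1
  have e2 : T ((i : ℕ) + 1) = t i.succ := by
    rw [hTeq _ i.isLt]
    congr 1
  rw [e1, e2]
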